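/- In a distributive category (in particular, any extensive category with finite products), every coproduct injection inl : X → X + Y is a monomorphism. -/

import Mathlib

open CategoryTheory CategoryTheory.Limits

/-- In a distributive category (the canonical morphism
`X×Y + X×Z → X×(Y+Z)` is an isomorphism for all `X, Y, Z`), every coproduct injection
`inl : X → X + Y` is a monomorphism. -/
theorem coprod_inl_mono_of_distributive {C : Type*} [Category C] [HasFiniteProducts C]
    [HasFiniteCoproducts C]
    (hdist : ∀ X Y Z : C,
      IsIso (coprod.desc (prod.map (𝟙 X) coprod.inl) (prod.map (𝟙 X) coprod.inr) :
        (X ⨯ Y) ⨿ (X ⨯ Z) ⟶ X ⨯ (Y ⨿ Z)))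
    (X Y : C) : Mono (coprod.inl : X ⟶ X ⨿ Y) := by
  constructor
  intro T f g h
  haveI := hdist X X Y
  set d : (X ⨯ X) ⨿ (X ⨯ Y) ⟶ X ⨯ (X ⨿ Y) :=
    coprod.desc (prod.map (𝟙 X) coprod.inl) (prod.map (𝟙 X) coprod.inr) with hd
  have h1 : (prod.lift g f ≫ coprod.inl) ≫ d = (prod.lift g g ≫ coprod.inl) ≫ d := by
    rw [hd, Category.assoc, Category.assoc, coprod.inl_desc]
    ext <;> simp [h]
  have h2 : prod.lift g f ≫ (coprod.inl : X ⨯ X ⟶ (X ⨯ X) ⨿ (X ⨯ Y)) =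
      prod.lift g g ≫ coprod.inl := (cancel_mono d).mp h1
  have h3 := congrArg (· ≫ coprod.desc (prod.snd : X ⨯ X ⟶ X) (prod.fst : X ⨯ Y ⟶ X)) h2
  simp only [Category.assoc] at h3
  rw [coprod.inl_desc, prod.lift_snd, prod.lift_snd] at h3
  simpa using h3
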